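/- Fix θ ∈ ℤ and let q : ℤ → [0,∞) satisfy ∑_n q(n) ≤ 1 and be supported either on {n ∈ ℤ : n ≥ θ} or on {n ∈ ℤ : n ≤ θ} (i.e. q vanishes on one side of θ). Then the function E(x) = (|x − θ| + 1)·q(x) is an e-value for 𝒟_θ; that is, ∑_x (|x − θ| + 1) q(x) f_P(x) ≤ 1 for every P ∈ 𝒟_θ. -/

import Mathlib

open MeasureTheory ENNReal

/-- `𝒟_θ`: θ-unimodal probability distributions on `ℤ`. -/
def UnimodalClass (θ : ℤ) : Set (Measure ℤ) :=
  {P | IsProbabilityMeasure P ∧ (∀ n : ℤ, n ≤ θ → P {n - 1} ≤ P {n}) ∧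
    (∀ n : ℤ, θ ≤ n → P {n + 1} ≤ P {n})}

/-- Fix `θ ∈ ℤ` and let `q : ℤ → [0,∞)` be a subprobability mass
function supported either on `{n ≥ θ}` or on `{n ≤ θ}`. Then `E(x) = (|x−θ|+1)·q(x)` is
an e-value for `𝒟_θ`: `∑ₓ (|x−θ|+1) q(x) f_P(x) ≤ 1` for every `P ∈ 𝒟_θ`. -/
theorem stmt11 (θ : ℤ) (q : ℤ → NNReal) (hq : ∑' n : ℤ, (q n : ℝ≥0∞) ≤ 1)
    (hsupp : (∀ n : ℤ, n < θ → q n = 0) ∨ (∀ n : ℤ, θ < n → q n = 0)) :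
    ∀ P ∈ UnimodalClass θ,
      ∑' x : ℤ, (((x - θ).natAbs : ℝ≥0∞) + 1) * (q x : ℝ≥0∞) * P {x} ≤ 1 := by
  rintro P ⟨hprob, hleft, hright⟩
  -- monotonicity to the right of θ
  have monoR : ∀ n : ℤ, θ ≤ n → ∀ k : ℤ, n ≤ k → P {k} ≤ P {n} := by
    intro n hn k hk
    refine Int.le_induction (motive := fun j _ => P {j} ≤ P {n}) le_rfl ?_ k hk
    intro k hk ih
    exact (hright k (hn.trans hk)).trans ih
  -- monotonicity to the left of θ
  have monoL : ∀ m : ℕ, ∀ n : ℤ, n ≤ θ → P {n - (m : ℤ)} ≤ P {n} := by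
    intro m
    induction m with
    | zero => intro n hn; simp
    | succ m ih =>
        intro n hn
        have h1 : P {n - ((m : ℤ) + 1)} ≤ P {n - (m : ℤ)} := by
          have := hleft (n - (m : ℤ)) (by omega)
          have he : n - (m : ℤ) - 1 = n - ((m : ℤ) + 1) := by ring
          rwa [he] at this
        exact h1.trans (ih n hn)
  -- key pointwise bound
  have key : ∀ x : ℤ, (((x - θ).natAbs : ℝ≥0∞) + 1) * P {x} ≤ 1 := by
    intro x
    rcases le_total θ x with hx | hx
    · set s : Finset ℤ := Finset.Icc θ x with hs
      have hcard : (x - θ).natAbs + 1 = s.card := by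
        rw [hs, Int.card_Icc]; omega
      have hsum : s.card • P {x} ≤ ∑ n ∈ s, P {n} :=
        Finset.card_nsmul_le_sum s _ _ (fun n hn => by
          simp only [hs, Finset.mem_Icc] at hn
          exact monoR n hn.1 x hn.2)
      calc (((x - θ).natAbs : ℝ≥0∞) + 1) * P {x} = (s.card : ℝ≥0∞) * P {x} := by
            rw [← hcard]; push_cast; ring
        _ = s.card • P {x} := by rw [nsmul_eq_mul]
        _ ≤ ∑ n ∈ s, P {n} := hsum
        _ ≤ P Set.univ := sum_measure_le_measure_univ
              (fun i _ => (measurableSet_singleton i).nullMeasurableSet)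
              (fun i _ j _ hij => Disjoint.aedisjoint (by simpa using hij))
        _ ≤ 1 := prob_le_one
    · set s : Finset ℤ := Finset.Icc x θ with hs
      have hcard : (x - θ).natAbs + 1 = s.card := by
        rw [hs, Int.card_Icc]; omega
      have hsum : s.card • P {x} ≤ ∑ n ∈ s, P {n} :=
        Finset.card_nsmul_le_sum s _ _ (fun n hn => by
          simp only [hs, Finset.mem_Icc] at hn
          have := monoL (n - x).toNat n hn.2
          have he : n - ((n - x).toNat : ℤ) = x := by omega
          rwa [he] at this)
      calc (((x - θ).natAbs : ℝ≥0∞) + 1) * P {x} = (s.card : ℝ≥0∞) * P {x} := by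
            rw [← hcard]; push_cast; ring
        _ = s.card • P {x} := by rw [nsmul_eq_mul]
        _ ≤ ∑ n ∈ s, P {n} := hsum
        _ ≤ P Set.univ := sum_measure_le_measure_univ
              (fun i _ => (measurableSet_singleton i).nullMeasurableSet)
              (fun i _ j _ hij => Disjoint.aedisjoint (by simpa using hij))
        _ ≤ 1 := prob_le_one
  calc ∑' x : ℤ, (((x - θ).natAbs : ℝ≥0∞) + 1) * (q x : ℝ≥0∞) * P {x}
      ≤ ∑' x : ℤ, (q x : ℝ≥0∞) := by
        apply ENNReal.tsum_le_tsum
        intro x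
        calc (((x - θ).natAbs : ℝ≥0∞) + 1) * (q x : ℝ≥0∞) * P {x}
            = ((((x - θ).natAbs : ℝ≥0∞) + 1) * P {x}) * (q x : ℝ≥0∞) := by ring
          _ ≤ 1 * (q x : ℝ≥0∞) := mul_le_mul_left (key x) _
          _ = (q x : ℝ≥0∞) := one_mul _
    _ ≤ 1 := hq
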